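/- Let A = [[λ₁, 0], [0, λ₂]] be a real diagonal 2×2 matrix and B = [[0, b], [c, 0]] a real antidiagonal 2×2 matrix, with λ₁, λ₂, b, c arbitrary real numbers. Then the generalized spectral radius of {A, B} equals max{ρ(A), ρ(B)} = max{|λ₁|, |λ₂|, √(|b·c|)}; in particular {A, B} has the spectral finiteness property. -/

import Mathlib

open Matrix

/-- The spectral radius of a real 2×2 matrix: the maximum modulus of its
complex eigenvalues. -/
noncomputable def specRad (M : Matrix (Fin 2) (Fin 2) ℝ) : ℝ :=
  (spectralRadius ℂ (M.map Complex.ofReal)).toReal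

/-- `prodsOfLen 𝒜 n` is the set `𝒜ⁿ` of all products of `n` matrices taken
from `𝒜`. -/
def prodsOfLen (𝒜 : Set (Matrix (Fin 2) (Fin 2) ℝ)) (n : ℕ) :
    Set (Matrix (Fin 2) (Fin 2) ℝ) :=
  {M | ∃ l : List (Matrix (Fin 2) (Fin 2) ℝ),
    l.length = n ∧ (∀ X ∈ l, X ∈ 𝒜) ∧ M = l.prod}

/-- The generalized spectral radius of `𝒜`:
`sup_{n ≥ 1} max_{M ∈ 𝒜ⁿ} ρ(M)^(1/n)`. -/
noncomputable def gsr (𝒜 : Set (Matrix (Fin 2) (Fin 2) ℝ)) : ℝ :=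
  sSup {x : ℝ | ∃ n : ℕ, 1 ≤ n ∧ ∃ M ∈ prodsOfLen 𝒜 n,
    x = specRad M ^ ((1 : ℝ) / n)}

/-- `𝒜` has the spectral finiteness property if its generalized spectral
radius is realized as `ρ(M)^(1/n)` for some `n ≥ 1` and some `M ∈ 𝒜ⁿ`. -/
def hasSpectralFiniteness (𝒜 : Set (Matrix (Fin 2) (Fin 2) ℝ)) : Prop :=
  ∃ n : ℕ, 1 ≤ n ∧ ∃ M ∈ prodsOfLen 𝒜 n, gsr 𝒜 = specRad M ^ ((1 : ℝ) / n)


open scoped NNReal ENNReal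

/- ### Auxiliary lemmas -/

lemma aux_mem_spec_iff (M : Matrix (Fin 2) (Fin 2) ℂ) (k : ℂ) :
    k ∈ spectrum ℂ M ↔ det (algebraMap ℂ (Matrix (Fin 2) (Fin 2) ℂ) k - M) = 0 := by
  rw [spectrum.mem_iff, Matrix.isUnit_iff_isUnit_det, isUnit_iff_ne_zero, not_ne_iff]

lemma aux_spec_diag (x y : ℂ) : spectrum ℂ (!![x,0;0,y]) = {x, y} := by
  ext k
  rw [aux_mem_spec_iff]
  simp [Matrix.det_fin_two, Matrix.algebraMap_matrix_apply, sub_eq_zero, mul_eq_zero,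
    Set.mem_insert_iff, eq_comm]

lemma aux_spec_anti (x y : ℂ) : spectrum ℂ (!![0,x;y,0]) = {z | z^2 = x*y} := by
  ext k
  rw [aux_mem_spec_iff]
  simp [Matrix.det_fin_two, Matrix.algebraMap_matrix_apply, sub_eq_zero, sq]

lemma aux_map_fin_two (x y z w : ℝ) :
    (!![x,y;z,w]).map Complex.ofReal = !![(x:ℂ),y;z,w] := by
  ext i j
  fin_cases i <;> fin_cases j <;> simp

lemma specRad_diag (x y : ℝ) : specRad !![x,0;0,y] = max |x| |y| := by
  unfold specRad
  have h := aux_map_fin_two x 0 0 y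
  push_cast at h
  rw [h, spectralRadius, aux_spec_diag, iSup_insert, iSup_singleton,
    ← ENNReal.coe_max, ENNReal.coe_toReal]
  simp [NNReal.coe_max]

lemma specRad_anti (x y : ℝ) : specRad !![0,x;y,0] = Real.sqrt |x*y| := by
  unfold specRad
  have h := aux_map_fin_two 0 x y 0
  push_cast at h
  rw [h, spectralRadius, aux_spec_anti]
  have key : ∀ z : ℂ, z^2 = (x:ℂ)*(y:ℂ) → ‖z‖ = Real.sqrt |x*y| := by
    intro z hz
    have h2 : ‖z‖^2 = |x*y| := by
      rw [← norm_pow, hz, show ((x:ℂ)*(y:ℂ)) = ((x*y : ℝ) : ℂ) by push_cast; ring]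
      simp [abs_mul]
    rw [← h2, Real.sqrt_sq (norm_nonneg z)]
  obtain ⟨z0, hz0⟩ := IsAlgClosed.exists_pow_nat_eq ((x:ℂ)*(y:ℂ)) (n := 2) zero_lt_two
  have heq : (⨆ z ∈ {z:ℂ | z^2 = x*y}, (‖z‖₊ : ℝ≥0∞)) = (‖z0‖₊ : ℝ≥0∞) := by
    apply le_antisymm
    · refine iSup₂_le fun z hz => ?_
      rw [ENNReal.coe_le_coe, ← NNReal.coe_le_coe, coe_nnnorm, coe_nnnorm,
        key z hz, key z0 hz0]
    · exact le_iSup₂ (f := fun (z : ℂ) (_ : z ∈ {z:ℂ | z^2 = x*y}) => (‖z‖₊ : ℝ≥0∞)) z0 hz0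
  rw [heq, ENNReal.coe_toReal, coe_nnnorm, key z0 hz0]

lemma specRad_nonneg (M : Matrix (Fin 2) (Fin 2) ℝ) : 0 ≤ specRad M :=
  ENNReal.toReal_nonneg

/-- Abstract criterion: if the spectral radius of every product of `n` matrices
from `𝒜` is at most `r ^ n` and `r` is achieved by some `M₀ ∈ 𝒜`, then
`gsr 𝒜 = r` and `𝒜` has the spectral finiteness property. -/
lemma gsr_eq_of (𝒜 : Set (Matrix (Fin 2) (Fin 2) ℝ)) (M0 : Matrix (Fin 2) (Fin 2) ℝ)
    (hM0 : M0 ∈ 𝒜) (r : ℝ) (hr0 : specRad M0 = r)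
    (hub : ∀ n : ℕ, 1 ≤ n → ∀ M ∈ prodsOfLen 𝒜 n, specRad M ≤ r ^ n) :
    gsr 𝒜 = r ∧ hasSpectralFiniteness 𝒜 := by
  have hrpos : 0 ≤ r := hr0 ▸ specRad_nonneg M0
  set S := {x : ℝ | ∃ n : ℕ, 1 ≤ n ∧ ∃ M ∈ prodsOfLen 𝒜 n,
    x = specRad M ^ ((1 : ℝ) / n)} with hS
  have hM0mem : M0 ∈ prodsOfLen 𝒜 1 :=
    ⟨[M0], rfl, by simpa using hM0, (List.prod_singleton).symm⟩
  have hone : specRad M0 ^ ((1 : ℝ) / (1 : ℕ)) = r := by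
    rw [hr0]; norm_num
  have hrS : r ∈ S := ⟨1, le_refl 1, M0, hM0mem, hone.symm⟩
  have hubS : ∀ x ∈ S, x ≤ r := by
    rintro x ⟨n, hn, M, hM, rfl⟩
    have hn0 : (n : ℝ) ≠ 0 := Nat.cast_ne_zero.mpr (by omega)
    have h1 : specRad M ^ ((1 : ℝ) / n) ≤ (r ^ n) ^ ((1 : ℝ) / n) :=
      Real.rpow_le_rpow (specRad_nonneg M) (hub n hn M hM)
        (by positivity)
    have h2 : ((r ^ n : ℝ)) ^ ((1 : ℝ) / n) = r := by
      rw [← Real.rpow_natCast r n, ← Real.rpow_mul hrpos, mul_one_div,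
        div_self hn0, Real.rpow_one]
    exact h2 ▸ h1
  have : gsr 𝒜 = r := le_antisymm (csSup_le ⟨r, hrS⟩ hubS) (le_csSup ⟨r, hubS⟩ hrS)
  exact ⟨this, 1, le_refl 1, M0, hM0mem, by rw [this, hone]⟩

/-- for a diagonal `A = diag(λ₁, λ₂)` and an antidiagonal
`B = !![0, b; c, 0]`, the generalized spectral radius of `{A, B}` equals
`max {ρ(A), ρ(B)} = max {|λ₁|, |λ₂|, √|b*c|}`; in particular `{A, B}` has the
spectral finiteness property. -/
theorem gsr_diagonal_and_antidiagonal
    (l1 l2 b c : ℝ)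
    (A B : Matrix (Fin 2) (Fin 2) ℝ)
    (hA : A = !![l1, 0; 0, l2]) (hB : B = !![0, b; c, 0]) :
    gsr {A, B} = max (specRad A) (specRad B) ∧
      max (specRad A) (specRad B) = max (max |l1| |l2|) (Real.sqrt |b * c|) ∧
      hasSpectralFiniteness {A, B} := by
  have hsA : specRad A = max |l1| |l2| := by rw [hA, specRad_diag]
  have hsB : specRad B = Real.sqrt |b * c| := by rw [hB, specRad_anti]
  set r : ℝ := max (specRad A) (specRad B) with hrdef
  have hr0 : 0 ≤ r := le_trans (specRad_nonneg A) (le_max_left _ _)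
  have hl1 : |l1| ≤ r := le_trans (le_trans (le_max_left _ _) hsA.ge) (le_max_left _ _)
  have hl2 : |l2| ≤ r := le_trans (le_trans (le_max_right _ _) hsA.ge) (le_max_left _ _)
  have hbc : |b * c| ≤ r ^ 2 := by
    have h1 : Real.sqrt |b * c| ≤ r := le_trans hsB.ge (le_max_right _ _)
    calc |b * c| = (Real.sqrt |b * c|) ^ 2 := (Real.sq_sqrt (abs_nonneg _)).symm
      _ ≤ r ^ 2 := by nlinarith [Real.sqrt_nonneg |b * c|]
  -- structural invariant for products
  have key : ∀ l : List (Matrix (Fin 2) (Fin 2) ℝ), (∀ X ∈ l, X ∈ ({A, B} : Set _)) →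
      (∃ x y, l.prod = !![x, 0; 0, y] ∧ |x| ≤ r ^ l.length ∧ |y| ≤ r ^ l.length) ∨
      (1 ≤ l.length ∧ ∃ x y, l.prod = !![0, x; y, 0] ∧
        |x| ≤ r ^ (l.length - 1) * |b| ∧ |y| ≤ r ^ (l.length - 1) * |c|) := by
    intro l
    induction l with
    | nil =>
      intro _
      exact Or.inl ⟨1, 1, by simp [Matrix.one_fin_two], by simp, by simp⟩
    | cons X l ih =>
      intro hmem
      have hXl : ∀ Y ∈ l, Y ∈ ({A, B} : Set _) := fun Y hY => hmem Y (List.mem_cons_of_mem _ hY)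
      have hX : X = A ∨ X = B := hmem X List.mem_cons_self
      rcases ih hXl with ⟨x, y, hp, hx, hy⟩ | ⟨hlen, x, y, hp, hx, hy⟩
      · rcases hX with rfl | rfl
        · refine Or.inl ⟨l1 * x, l2 * y, ?_, ?_, ?_⟩
          · rw [List.prod_cons, hp, hA, Matrix.mul_fin_two]; ring_nf
          · rw [List.length_cons, pow_succ, abs_mul, mul_comm]
            exact mul_le_mul hx hl1 (abs_nonneg _) (pow_nonneg hr0 _)
          · rw [List.length_cons, pow_succ, abs_mul, mul_comm]
            exact mul_le_mul hy hl2 (abs_nonneg _) (pow_nonneg hr0 _)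
        · refine Or.inr ⟨by simp, b * y, c * x, ?_, ?_, ?_⟩
          · rw [List.prod_cons, hp, hB, Matrix.mul_fin_two]; ring_nf
          · rw [List.length_cons, Nat.add_sub_cancel, abs_mul, mul_comm]
            exact mul_le_mul hy le_rfl (abs_nonneg _) (pow_nonneg hr0 _)
          · rw [List.length_cons, Nat.add_sub_cancel, abs_mul, mul_comm]
            exact mul_le_mul hx le_rfl (abs_nonneg _) (pow_nonneg hr0 _)
      · obtain ⟨m, hm⟩ : ∃ m, l.length = m + 1 := ⟨l.length - 1, by omega⟩
        rw [hm, Nat.add_sub_cancel] at hx hy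
        rcases hX with rfl | rfl
        · refine Or.inr ⟨by simp, l1 * x, l2 * y, ?_, ?_, ?_⟩
          · rw [List.prod_cons, hp, hA, Matrix.mul_fin_two]; ring_nf
          · rw [List.length_cons, Nat.add_sub_cancel, hm, abs_mul]
            calc |l1| * |x| ≤ r * (r ^ m * |b|) := mul_le_mul hl1 hx (abs_nonneg _) hr0
              _ = r ^ (m + 1) * |b| := by ring
          · rw [List.length_cons, Nat.add_sub_cancel, hm, abs_mul]
            calc |l2| * |y| ≤ r * (r ^ m * |c|) := mul_le_mul hl2 hy (abs_nonneg _) hr0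
              _ = r ^ (m + 1) * |c| := by ring
        · refine Or.inl ⟨b * y, c * x, ?_, ?_, ?_⟩
          · rw [List.prod_cons, hp, hB, Matrix.mul_fin_two]; ring_nf
          · rw [List.length_cons, hm]
            calc |b * y| = |b| * |y| := abs_mul _ _
              _ ≤ |b| * (r ^ m * |c|) := by
                  exact mul_le_mul le_rfl hy (abs_nonneg _) (abs_nonneg _)
              _ = r ^ m * |b * c| := by rw [abs_mul]; ring
              _ ≤ r ^ m * r ^ 2 := mul_le_mul le_rfl hbc (abs_nonneg _) (by positivity)
              _ = r ^ (m + 1 + 1) := by ring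
          · rw [List.length_cons, hm]
            calc |c * x| = |c| * |x| := abs_mul _ _
              _ ≤ |c| * (r ^ m * |b|) := by
                  exact mul_le_mul le_rfl hx (abs_nonneg _) (abs_nonneg _)
              _ = r ^ m * |b * c| := by rw [abs_mul]; ring
              _ ≤ r ^ m * r ^ 2 := mul_le_mul le_rfl hbc (abs_nonneg _) (by positivity)
              _ = r ^ (m + 1 + 1) := by ring
  -- bound on spectral radius of products
  have hub : ∀ n : ℕ, 1 ≤ n → ∀ M ∈ prodsOfLen ({A, B} : Set _) n, specRad M ≤ r ^ n := by
    rintro n hn M ⟨l, hlen, hl, rfl⟩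
    rcases key l hl with ⟨x, y, hp, hx, hy⟩ | ⟨hlen1, x, y, hp, hx, hy⟩
    · rw [hp, specRad_diag, hlen] at *
      exact max_le hx hy
    · obtain ⟨m, hm⟩ : ∃ m, l.length = m + 1 := ⟨l.length - 1, by omega⟩
      rw [hm, Nat.add_sub_cancel] at hx hy
      rw [hp, specRad_anti, ← hlen, hm]
      have hxy : |x * y| ≤ (r ^ (m + 1)) ^ 2 := by
        calc |x * y| = |x| * |y| := abs_mul _ _
          _ ≤ (r ^ m * |b|) * (r ^ m * |c|) :=
              mul_le_mul hx hy (abs_nonneg _) (by positivity)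
          _ = (r ^ m) ^ 2 * |b * c| := by rw [abs_mul]; ring
          _ ≤ (r ^ m) ^ 2 * r ^ 2 := mul_le_mul le_rfl hbc (abs_nonneg _) (by positivity)
          _ = (r ^ (m + 1)) ^ 2 := by ring
      calc Real.sqrt |x * y| ≤ Real.sqrt ((r ^ (m + 1)) ^ 2) := Real.sqrt_le_sqrt hxy
        _ = r ^ (m + 1) := Real.sqrt_sq (by positivity)
  -- put things together
  have hABr : specRad A = r ∨ specRad B = r := by
    rcases max_cases (specRad A) (specRad B) with ⟨h, _⟩ | ⟨h, _⟩
    · exact Or.inl h.symm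
    · exact Or.inr h.symm
  have main : gsr {A, B} = r ∧ hasSpectralFiniteness {A, B} := by
    rcases hABr with h | h
    · exact gsr_eq_of _ A (by simp) r h hub
    · exact gsr_eq_of _ B (by simp) r h hub
  refine ⟨main.1, ?_, main.2⟩
  rw [hrdef, hsA, hsB]
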